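/- (Sufficiency step in the proof of Proposition 4.1) Let ε > 0, δ = e^{−2q}, φ_x(σ) = e^{−β·h̃_x(σ)·σ_x}, and R_H = max_{σ,τ∈{±1}^V} |H(σ) − H(τ)|. Suppose σ, τ ∈ {±1}^V satisfy π^SCA_{β,q}(σ) ≥ π^SCA_{β,q}(τ) and that β·ε·R_H ≥ Σ_{x∈V} log((1 + δ·φ_x(σ))/(1 + δ·φ_x(τ))). Then w^G_β(σ) ≥ w^G_β(τ)·e^{−β·ε·R_H}, i.e. the latter inequality of order-preservation π^G_β(σ) ≥ π^G_β(τ)·e^{−β·ε·R_H} holds. -/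

import Mathlib

open Finset Real

variable {V : Type*}

/-- The real value (`±1`) of a spin `σ x ∈ ℤˣ = {±1}`. -/
def sp (σ : V → ℤˣ) (x : V) : ℝ := ((σ x : ℤ) : ℝ)

variable [Fintype V] [DecidableEq V]

/-- The Ising Hamiltonian
`H(σ) = -(1/2)·Σ_{x,y} J_{x,y} σ_x σ_y - Σ_x h_x σ_x`. -/
noncomputable def Ham (J : V → V → ℝ) (h : V → ℝ) (σ : V → ℤˣ) : ℝ :=
  -(1 / 2) * ∑ x, ∑ y, J x y * sp σ x * sp σ y - ∑ x, h x * sp σ x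

/-- The symmetrized Hamiltonian
`H̃(σ,τ) = -(1/2)·Σ_{x,y} J_{x,y} σ_x τ_y - (1/2)·Σ_x h_x (σ_x + τ_x)`. -/
noncomputable def Ham2 (J : V → V → ℝ) (h : V → ℝ) (σ τ : V → ℤˣ) : ℝ :=
  -(1 / 2) * ∑ x, ∑ y, J x y * sp σ x * sp τ y - (1 / 2) * ∑ x, h x * (sp σ x + sp τ x)

/-- The cavity field `h̃_x(σ) = Σ_y J_{x,y} σ_y + h_x`. -/
noncomputable def cavity (J : V → V → ℝ) (h : V → ℝ) (σ : V → ℤˣ) (x : V) : ℝ :=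
  ∑ y, J x y * sp σ y + h x

/-- The Boltzmann weight `w^G_β(σ) = e^{-β H(σ)}`. -/
noncomputable def wG (J : V → V → ℝ) (h : V → ℝ) (β : ℝ) (σ : V → ℤˣ) : ℝ :=
  Real.exp (-β * Ham J h σ)

/-- The Gibbs distribution `π^G_β(σ) = w^G_β(σ) / Σ_τ w^G_β(τ)`. -/
noncomputable def piG (J : V → V → ℝ) (h : V → ℝ) (β : ℝ) (σ : V → ℤˣ) : ℝ :=
  wG J h β σ / ∑ τ : V → ℤˣ, wG J h β τ

/-- `spinFlip σ x` is the configuration `σ^x`, i.e. `σ` with the spin at `x` flipped. -/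
def spinFlip (σ : V → ℤˣ) (x : V) : V → ℤˣ := Function.update σ x (-(σ x))

/-- The Glauber transition probability to the one-spin-flipped configuration:
`P^G_β(σ, σ^x) = (1/|V|) · w^G_β(σ^x) / (w^G_β(σ) + w^G_β(σ^x))`. -/
noncomputable def PGflip (J : V → V → ℝ) (h : V → ℝ) (β : ℝ) (σ : V → ℤˣ) (x : V) : ℝ :=
  (1 / (Fintype.card V : ℝ)) * (wG J h β (spinFlip σ x) / (wG J h β σ + wG J h β (spinFlip σ x)))

/-- The full Glauber transition probability: `P^G_β(σ,σ^x)` to a one-spin-flipped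
configuration, `1 - Σ_x P^G_β(σ,σ^x)` for staying, and `0` otherwise. -/
noncomputable def PG (J : V → V → ℝ) (h : V → ℝ) (β : ℝ) (σ τ : V → ℤˣ) : ℝ :=
  if τ = σ then 1 - ∑ x, PGflip J h β σ x
  else ∑ x ∈ Finset.univ.filter (fun x => τ = spinFlip σ x), PGflip J h β σ x

/-- The SCA weight `w^SCA_{β,q}(σ) = Σ_τ exp(-β H̃(σ,τ) + q Σ_x σ_x τ_x)`. -/
noncomputable def wSCA (J : V → V → ℝ) (h : V → ℝ) (β q : ℝ) (σ : V → ℤˣ) : ℝ :=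
  ∑ τ : V → ℤˣ, Real.exp (-β * Ham2 J h σ τ + q * ∑ x, sp σ x * sp τ x)

/-- The SCA transition probability
`P^SCA_{β,q}(σ,τ) = exp(-β H̃(σ,τ) + q Σ_x σ_x τ_x) / w^SCA_{β,q}(σ)`. -/
noncomputable def PSCA (J : V → V → ℝ) (h : V → ℝ) (β q : ℝ) (σ τ : V → ℤˣ) : ℝ :=
  Real.exp (-β * Ham2 J h σ τ + q * ∑ x, sp σ x * sp τ x) / wSCA J h β q σ

/-- The SCA equilibrium distribution `π^SCA_{β,q}(σ) = w^SCA_{β,q}(σ) / Σ_τ w^SCA_{β,q}(τ)`. -/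
noncomputable def piSCA (J : V → V → ℝ) (h : V → ℝ) (β q : ℝ) (σ : V → ℤˣ) : ℝ :=
  wSCA J h β q σ / ∑ τ : V → ℤˣ, wSCA J h β q τ

/-- The disagreement set `D_{σ,τ} = {x ∈ V : σ_x ≠ τ_x}`. -/
def Dset (σ τ : V → ℤˣ) : Finset V := Finset.univ.filter (fun x => σ x ≠ τ x)

/-- The expected number of spin-flips per update of the Glauber dynamics,
`E^G_β[|D_{σ,X_σ}|] = Σ_τ |D_{σ,τ}| P^G_β(σ,τ)`. -/
noncomputable def EG (J : V → V → ℝ) (h : V → ℝ) (β : ℝ) (σ : V → ℤˣ) : ℝ :=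
  ∑ τ : V → ℤˣ, ((Dset σ τ).card : ℝ) * PG J h β σ τ

/-- The expected number of spin-flips per update of the SCA dynamics,
`E^SCA_{β,q}[|D_{σ,X_σ}|] = Σ_τ |D_{σ,τ}| P^SCA_{β,q}(σ,τ)`. -/
noncomputable def ESCA (J : V → V → ℝ) (h : V → ℝ) (β q : ℝ) (σ : V → ℤˣ) : ℝ :=
  ∑ τ : V → ℤˣ, ((Dset σ τ).card : ℝ) * PSCA J h β q σ τ

/-- `v = Σ_{{x,y} : x≠y} J_{x,y}² + Σ_x h_x²`, the sum over unordered pairs of distinct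
vertices written as `(1/2)·Σ_{x≠y} J_{x,y}²`. -/
noncomputable def vtot (J : V → V → ℝ) (h : V → ℝ) : ℝ :=
  (1 / 2) * ∑ x, ∑ y ∈ Finset.univ.filter (fun y => y ≠ x), (J x y) ^ 2 + ∑ x, (h x) ^ 2

lemma sum_units' (f : ℤˣ → ℝ) : ∑ s : ℤˣ, f s = f 1 + f (-1) := by
  rw [show (univ : Finset ℤˣ) = {1, -1} by decide]; simp

lemma exp_pm (c d : ℝ) (hcd : c = d ∨ c = -d) :
    Real.exp c + Real.exp (-c) = Real.exp d + Real.exp (-d) := by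
  rcases hcd with rfl | rfl
  · rfl
  · simp [add_comm]

lemma exponent_eq (J : V → V → ℝ) (h : V → ℝ) (β q : ℝ)
    (hJ : ∀ x y, J x y = J y x) (σ τ : V → ℤˣ) :
    -β * Ham2 J h σ τ + q * ∑ x, sp σ x * sp τ x
      = (β / 2 * ∑ x, h x * sp σ x)
        + ∑ x, (β * cavity J h σ x / 2 + q * sp σ x) * sp τ x := by
  have swap : ∑ x, ∑ y, J x y * sp σ x * sp τ y
      = ∑ x, (∑ y, J x y * sp σ y) * sp τ x := by
    rw [Finset.sum_comm]
    refine Finset.sum_congr rfl fun x _ => ?_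
    rw [Finset.sum_mul]
    refine Finset.sum_congr rfl fun y _ => ?_
    rw [hJ y x]
  have hB : ∑ x, h x * (sp σ x + sp τ x)
      = ∑ x, h x * sp σ x + ∑ x, h x * sp τ x := by
    simp [mul_add, Finset.sum_add_distrib]
  have hR : ∑ x, (β * cavity J h σ x / 2 + q * sp σ x) * sp τ x
      = β / 2 * ∑ x, (∑ y, J x y * sp σ y) * sp τ x
        + β / 2 * ∑ x, h x * sp τ x + q * ∑ x, sp σ x * sp τ x := by
    unfold cavity
    rw [Finset.mul_sum, Finset.mul_sum, Finset.mul_sum, ← Finset.sum_add_distrib,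
      ← Finset.sum_add_distrib]
    exact Finset.sum_congr rfl fun x _ => by ring
  unfold Ham2
  rw [swap, hB, hR]; ring

lemma wSCA_eq (J : V → V → ℝ) (h : V → ℝ) (β q : ℝ)
    (hJ : ∀ x y, J x y = J y x) (σ : V → ℤˣ) :
    wSCA J h β q σ = Real.exp (q * (Fintype.card V : ℝ)) * wG J h β σ *
      ∏ x, (1 + Real.exp (-(2 * q)) * Real.exp (-β * cavity J h σ x * sp σ x)) := by
  unfold wSCA
  have h1 : ∀ τ : V → ℤˣ, Real.exp (-β * Ham2 J h σ τ + q * ∑ x, sp σ x * sp τ x)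
      = Real.exp (β / 2 * ∑ x, h x * sp σ x) *
        ∏ x, Real.exp ((β * cavity J h σ x / 2 + q * sp σ x) * ((τ x : ℤ) : ℝ)) := by
    intro τ
    rw [exponent_eq J h β q hJ σ τ, Real.exp_add, ← Real.exp_sum]
    rfl
  simp only [h1]
  rw [← Finset.mul_sum,
    ← Fintype.prod_sum (fun x (s : ℤˣ) =>
      Real.exp ((β * cavity J h σ x / 2 + q * sp σ x) * ((s : ℤ) : ℝ)))]
  have h3 : ∀ x, ∑ s : ℤˣ, Real.exp ((β * cavity J h σ x / 2 + q * sp σ x) * ((s : ℤ) : ℝ))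
      = Real.exp (β * cavity J h σ x / 2 * sp σ x + q) *
        (1 + Real.exp (-(2 * q)) * Real.exp (-β * cavity J h σ x * sp σ x)) := by
    intro x
    rw [sum_units']
    have step1 : Real.exp ((β * cavity J h σ x / 2 + q * sp σ x) * ((1 : ℤˣ) : ℤ))
        + Real.exp ((β * cavity J h σ x / 2 + q * sp σ x) * (((-1 : ℤˣ) : ℤ) : ℝ))
        = Real.exp (β * cavity J h σ x / 2 * sp σ x + q)
        + Real.exp (-(β * cavity J h σ x / 2 * sp σ x + q)) := by
      push_cast
      rw [mul_one, mul_neg_one, ← neg_neg ((β * cavity J h σ x / 2 + q * sp σ x))]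
      rw [neg_neg]
      refine exp_pm _ _ ?_
      rcases Int.units_eq_one_or (σ x) with hs | hs
      · left; simp only [sp, hs]; push_cast; ring
      · right; simp only [sp, hs]; push_cast; ring
    rw [step1, mul_add, mul_one, ← Real.exp_add, ← Real.exp_add]
    congr 2
    ring
  rw [Finset.prod_congr rfl fun x _ => h3 x, Finset.prod_mul_distrib, ← Real.exp_sum,
    ← mul_assoc, ← Real.exp_add]
  congr 1
  unfold wG
  rw [← Real.exp_add]
  congr 1
  rw [Finset.sum_add_distrib, Finset.sum_const, nsmul_eq_mul]
  have hA : ∑ x, β * cavity J h σ x / 2 * sp σ x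
      = β / 2 * ∑ x, ∑ y, J x y * sp σ x * sp σ y + β / 2 * ∑ x, h x * sp σ x := by
    unfold cavity
    rw [Finset.mul_sum, Finset.mul_sum, ← Finset.sum_add_distrib]
    refine Finset.sum_congr rfl fun x _ => ?_
    have e1 : ∑ y, J x y * sp σ x * sp σ y = (∑ y, J x y * sp σ y) * sp σ x := by
      rw [Finset.sum_mul]
      exact Finset.sum_congr rfl fun y _ => by ring
    rw [e1]; ring
  rw [hA]
  unfold Ham
  rw [Finset.card_univ]
  ring

/-- sufficiency step in the proof of Proposition 4.1: if
`π^SCA_{β,q}(σ) ≥ π^SCA_{β,q}(τ)` and `β ε R_H ≥ Σ_x log((1 + δ φ_x(σ))/(1 + δ φ_x(τ)))`,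
where `δ = e^{-2q}` and `φ_x(σ) = e^{-β h̃_x(σ) σ_x}`, then
`w^G_β(σ) ≥ w^G_β(τ) e^{-β ε R_H}`, i.e. `π^G_β(σ) ≥ π^G_β(τ) e^{-β ε R_H}`. -/
theorem order_preservation_sufficiency_step
    (J : V → V → ℝ) (h : V → ℝ) (β q ε : ℝ) (hβ : 0 ≤ β) (hq : 0 ≤ q) (hε : 0 < ε)
    (hJ : ∀ x y, J x y = J y x) (hJ0 : ∀ x, J x x = 0)
    (RH : ℝ)
    (hR : IsGreatest {r : ℝ | ∃ σ τ : V → ℤˣ, r = |Ham J h σ - Ham J h τ|} RH)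
    (δ : ℝ) (hδ : δ = Real.exp (-(2 * q)))
    (φ : (V → ℤˣ) → V → ℝ)
    (hφ : ∀ σ x, φ σ x = Real.exp (-β * cavity J h σ x * sp σ x)) :
    ∀ σ τ : V → ℤˣ,
      piSCA J h β q σ ≥ piSCA J h β q τ →
      β * ε * RH ≥ ∑ x, Real.log ((1 + δ * φ σ x) / (1 + δ * φ τ x)) →
      wG J h β σ ≥ wG J h β τ * Real.exp (-(β * ε * RH)) ∧
      piG J h β σ ≥ piG J h β τ * Real.exp (-(β * ε * RH)) := by
  intro σ τ hpi hsum
  set X := β * ε * RH with hX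
  have hfac : ∀ ρ : V → ℤˣ, wSCA J h β q ρ
      = Real.exp (q * (Fintype.card V : ℝ)) * wG J h β ρ * ∏ x, (1 + δ * φ ρ x) := by
    intro ρ
    simp only [hδ, hφ]
    exact wSCA_eq J h β q hJ ρ
  have hxpos : ∀ (ρ : V → ℤˣ) (x : V), 0 < 1 + δ * φ ρ x := by
    intro ρ x; rw [hδ, hφ]; positivity
  have hPpos : ∀ ρ : V → ℤˣ, 0 < ∏ x, (1 + δ * φ ρ x) :=
    fun ρ => Finset.prod_pos fun x _ => hxpos ρ x
  have hwGpos : ∀ ρ : V → ℤˣ, 0 < wG J h β ρ := fun ρ => Real.exp_pos _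
  have hZ : 0 < ∑ ρ : V → ℤˣ, wSCA J h β q ρ := by
    refine Finset.sum_pos (fun ρ _ => ?_) univ_nonempty
    rw [hfac ρ]
    exact mul_pos (mul_pos (Real.exp_pos _) (hwGpos ρ)) (hPpos ρ)
  have h1 : wSCA J h β q τ ≤ wSCA J h β q σ := by
    unfold piSCA at hpi
    exact (div_le_div_iff_of_pos_right hZ).mp hpi
  have hwmul : wG J h β τ * ∏ x, (1 + δ * φ τ x) ≤ wG J h β σ * ∏ x, (1 + δ * φ σ x) := by
    rw [hfac τ, hfac σ, mul_assoc, mul_assoc] at h1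
    exact le_of_mul_le_mul_left h1 (Real.exp_pos _)
  have hlog : Real.log ((∏ x, (1 + δ * φ σ x)) / ∏ x, (1 + δ * φ τ x)) ≤ X := by
    rw [← Finset.prod_div_distrib,
      Real.log_prod fun x _ => ne_of_gt (div_pos (hxpos σ x) (hxpos τ x))]
    exact hsum
  have hPle : (∏ x, (1 + δ * φ σ x)) ≤ Real.exp X * ∏ x, (1 + δ * φ τ x) := by
    have := Real.exp_le_exp.mpr hlog
    rw [Real.exp_log (div_pos (hPpos σ) (hPpos τ))] at this
    calc (∏ x, (1 + δ * φ σ x))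
        = (∏ x, (1 + δ * φ σ x)) / (∏ x, (1 + δ * φ τ x)) * ∏ x, (1 + δ * φ τ x) := by
          rw [div_mul_cancel₀ _ (hPpos τ).ne']
      _ ≤ Real.exp X * ∏ x, (1 + δ * φ τ x) :=
          mul_le_mul_of_nonneg_right this (hPpos τ).le
  have goal1 : wG J h β τ * Real.exp (-X) ≤ wG J h β σ := by
    have heq : wG J h β τ * (∏ x, (1 + δ * φ τ x)) / (Real.exp X * ∏ x, (1 + δ * φ τ x))
        = wG J h β τ * Real.exp (-X) := by
      rw [Real.exp_neg, mul_comm (Real.exp X) (∏ x, (1 + δ * φ τ x)), ← div_div,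
        mul_div_assoc, div_self (hPpos τ).ne', mul_one, div_eq_mul_inv]
    calc wG J h β τ * Real.exp (-X)
        = wG J h β τ * (∏ x, (1 + δ * φ τ x)) / (Real.exp X * ∏ x, (1 + δ * φ τ x)) :=
          heq.symm
      _ ≤ wG J h β τ * (∏ x, (1 + δ * φ τ x)) / ∏ x, (1 + δ * φ σ x) :=
          div_le_div_of_nonneg_left (mul_pos (hwGpos τ) (hPpos τ)).le (hPpos σ) hPle
      _ ≤ wG J h β σ := (div_le_iff₀ (hPpos σ)).mpr hwmul
  refine ⟨goal1, ?_⟩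
  have hZG : 0 < ∑ ρ : V → ℤˣ, wG J h β ρ :=
    Finset.sum_pos (fun ρ _ => hwGpos ρ) univ_nonempty
  unfold piG
  rw [ge_iff_le, div_mul_eq_mul_div]
  exact (div_le_div_iff_of_pos_right hZG).mpr goal1
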